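/- Let (V₁, ⟨·,·⟩_h, V₂, B) be a step-two Carnot datum with dim V₁ = m and dim V₂ = m₂, set Q = m + 2m₂, let g be any inner product on V₂, and let ε₁,…,ε_{m₂} be a g-orthonormal basis of V₂. Define Φ_g(x,t) = 16(Q+2)·⟨((J^g_t)² + ‖t‖_g²·id)x, x⟩_h / N_g(x,t)⁶ − 2·Σ_{q=1}^{m₂} ⟨((J^g_{ε_q})² + id)x, x⟩_h / N_g(x,t)². Then for every (x,t) ∈ V₁ × V₂ with (x,t) ≠ (0,0), |Φ_g(x,t)| ≤ √m · (Q + 2 + 2m₂) · δ(g). (The quantity Φ_g equals N_g·ℒN_g − (Q−1)·‖∇₀N_g‖_h² for the sub-Laplacian ℒ of the associated group.) -/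

import Mathlib

open scoped RealInnerProductSpace

noncomputable section

variable {V₁ : Type*} [NormedAddCommGroup V₁] [InnerProductSpace ℝ V₁] [FiniteDimensional ℝ V₁]
variable {V₂ : Type*} [AddCommGroup V₂] [Module ℝ V₂] [FiniteDimensional ℝ V₂]

/-- `g` is an inner product (symmetric positive-definite bilinear form) on `V₂`. -/
structure IsInnerProd (g : V₂ →ₗ[ℝ] V₂ →ₗ[ℝ] ℝ) : Prop where
  symm : ∀ s t : V₂, g s t = g t s
  posdef : ∀ t : V₂, t ≠ 0 → 0 < g t t

/-- The norm `‖t‖_g = √(g t t)` associated to a vertical inner product `g`. -/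
def gnorm (g : V₂ →ₗ[ℝ] V₂ →ₗ[ℝ] ℝ) (t : V₂) : ℝ := Real.sqrt (g t t)

/-- The Hilbert–Schmidt norm `‖F‖_HS = √(trace(F* F))` of an endomorphism of the
inner product space `V₁`. -/
def hsNorm (F : V₁ →ₗ[ℝ] V₁) : ℝ :=
  Real.sqrt (LinearMap.trace ℝ V₁ (LinearMap.adjoint F ∘ₗ F))

/-- `J` is the J-operator of the bracket `B` with respect to the vertical inner product `g`:
`⟨J_T U, V⟩_h = g(B(U,V), T)` for all `U V : V₁`, `T : V₂`. -/
def IsJOp (B : V₁ →ₗ[ℝ] V₁ →ₗ[ℝ] V₂) (g : V₂ →ₗ[ℝ] V₂ →ₗ[ℝ] ℝ)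
    (J : V₂ → V₁ →ₗ[ℝ] V₁) : Prop :=
  ∀ (T : V₂) (U V : V₁), ⟪J T U, V⟫ = g (B U V) T

/-- The H-type deviation relative to a fixed vertical inner product `g` with J-operator `J`:
`δ(g) = (dim V₁)^{-1/2} sup { ‖(J_T)² + id‖_HS : ‖T‖_g = 1 }`. -/
def deltaOf (g : V₂ →ₗ[ℝ] V₂ →ₗ[ℝ] ℝ) (J : V₂ → V₁ →ₗ[ℝ] V₁) : ℝ :=
  (Real.sqrt (Module.finrank ℝ V₁))⁻¹ *
    sSup ((fun T => hsNorm (J T ∘ₗ J T + LinearMap.id)) '' {T : V₂ | gnorm g T = 1})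

/-- The H-type deviation of a step-two Carnot datum: the infimum of `δ(g)` over all vertical
inner products `g` on `V₂`. -/
def htypeDeviation (B : V₁ →ₗ[ℝ] V₁ →ₗ[ℝ] V₂) : ℝ :=
  sInf { d : ℝ | ∃ (g : V₂ →ₗ[ℝ] V₂ →ₗ[ℝ] ℝ) (J : V₂ → V₁ →ₗ[ℝ] V₁),
    IsInnerProd g ∧ IsJOp B g J ∧ d = deltaOf g J }

end

noncomputable section

open scoped RealInnerProductSpace

section Aux

variable {V₁ : Type*} [NormedAddCommGroup V₁] [InnerProductSpace ℝ V₁] [FiniteDimensional ℝ V₁]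
variable {ι : Type*} [Fintype ι] [DecidableEq ι]

lemma trace_adjoint_comp (b : OrthonormalBasis ι ℝ V₁) (F : V₁ →ₗ[ℝ] V₁) :
    LinearMap.trace ℝ V₁ (LinearMap.adjoint F ∘ₗ F) = ∑ i, ‖F (b i)‖ ^ 2 := by
  rw [LinearMap.trace_eq_matrix_trace ℝ b.toBasis, Matrix.trace]
  refine Finset.sum_congr rfl fun i _ => ?_
  rw [Matrix.diag_apply, LinearMap.toMatrix_apply, b.coe_toBasis, b.coe_toBasis_repr_apply,
    b.repr_apply_apply, LinearMap.comp_apply, LinearMap.adjoint_inner_right,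
    real_inner_self_eq_norm_sq]

/-- The "row vector" map realizing the HS norm. -/
def hsVec (b : OrthonormalBasis ι ℝ V₁) : (V₁ →ₗ[ℝ] V₁) →ₗ[ℝ] PiLp 2 (fun _ : ι => V₁) where
  toFun F := (WithLp.equiv 2 (∀ _ : ι, V₁)).symm fun i => F (b i)
  map_add' _ _ := rfl
  map_smul' _ _ := rfl

lemma hsNorm_eq_norm (b : OrthonormalBasis ι ℝ V₁) (F : V₁ →ₗ[ℝ] V₁) :
    hsNorm F = ‖hsVec b F‖ := by
  have h : ‖hsVec b F‖ ^ 2 = ∑ i, ‖F (b i)‖ ^ 2 := PiLp.norm_sq_eq_of_L2 _ (hsVec b F)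
  rw [hsNorm, trace_adjoint_comp b F, ← h, Real.sqrt_sq (norm_nonneg _)]

lemma hsNorm_nonneg (F : V₁ →ₗ[ℝ] V₁) : 0 ≤ hsNorm F := Real.sqrt_nonneg _

lemma apply_le_hsNorm (b : OrthonormalBasis ι ℝ V₁) (F : V₁ →ₗ[ℝ] V₁) (x : V₁) :
    ‖F x‖ ≤ hsNorm F * ‖x‖ := by
  have hx : x = ∑ i, b.repr x i • b i := (b.sum_repr x).symm
  have h1 : ‖F x‖ ≤ ∑ i, |b.repr x i| * ‖F (b i)‖ := by
    calc ‖F x‖ = ‖∑ i, b.repr x i • F (b i)‖ := by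
          conv_lhs => rw [hx]
          rw [map_sum]; simp [map_smul]
      _ ≤ ∑ i, ‖b.repr x i • F (b i)‖ := norm_sum_le _ _
      _ = ∑ i, |b.repr x i| * ‖F (b i)‖ := by simp [norm_smul]
  have hcs : (∑ i, |b.repr x i| * ‖F (b i)‖) ^ 2 ≤
      (∑ i, |b.repr x i| ^ 2) * ∑ i, ‖F (b i)‖ ^ 2 := by
    exact Finset.sum_mul_sq_le_sq_mul_sq Finset.univ
      (fun i => |b.repr x i|) (fun i => ‖F (b i)‖)
  have hpar : ∑ i, |b.repr x i| ^ 2 = ‖x‖ ^ 2 := by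
    have := b.repr.norm_map x
    rw [← this, EuclideanSpace.norm_eq]
    rw [Real.sq_sqrt (by positivity)]
    simp [sq_abs]
  have hF : ∑ i, ‖F (b i)‖ ^ 2 = hsNorm F ^ 2 := by
    rw [hsNorm, Real.sq_sqrt]
    · exact (trace_adjoint_comp b F).symm
    · rw [trace_adjoint_comp b F]; positivity
  have h2 : (∑ i, |b.repr x i| * ‖F (b i)‖) ^ 2 ≤ (hsNorm F * ‖x‖) ^ 2 := by
    rw [mul_pow]; rw [hpar, hF] at hcs; linarith
  have h3 : ∑ i, |b.repr x i| * ‖F (b i)‖ ≤ hsNorm F * ‖x‖ := by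
    have hnn : 0 ≤ ∑ i, |b.repr x i| * ‖F (b i)‖ := by positivity
    nlinarith [mul_nonneg (hsNorm_nonneg F) (norm_nonneg x)]
  linarith

lemma inner_le_hsNorm (b : OrthonormalBasis ι ℝ V₁) (F : V₁ →ₗ[ℝ] V₁) (x : V₁) :
    |⟪F x, x⟫| ≤ hsNorm F * ‖x‖ ^ 2 := by
  calc |⟪F x, x⟫| ≤ ‖F x‖ * ‖x‖ := abs_real_inner_le_norm _ _
    _ ≤ hsNorm F * ‖x‖ * ‖x‖ :=
        mul_le_mul_of_nonneg_right (apply_le_hsNorm b F x) (norm_nonneg x)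
    _ = hsNorm F * ‖x‖ ^ 2 := by ring

end Aux

section Aux2

variable {V₁ : Type*} [NormedAddCommGroup V₁] [InnerProductSpace ℝ V₁] [FiniteDimensional ℝ V₁]
variable {V₂ : Type*} [AddCommGroup V₂] [Module ℝ V₂] [FiniteDimensional ℝ V₂]

/-- The `J`-operator packaged as a linear map in `T`. -/
def JLin (B : V₁ →ₗ[ℝ] V₁ →ₗ[ℝ] V₂) (g : V₂ →ₗ[ℝ] V₂ →ₗ[ℝ] ℝ) (J : V₂ → V₁ →ₗ[ℝ] V₁)
    (hJ : IsJOp B g J) : V₂ →ₗ[ℝ] (V₁ →ₗ[ℝ] V₁) where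
  toFun := J
  map_add' s t := by
    have hJ' : ∀ (T : V₂) (U V : V₁), ⟪J T U, V⟫ = g (B U V) T := hJ
    ext u
    refine ext_inner_right ℝ fun v => ?_
    simp only [hJ', LinearMap.add_apply, inner_add_left, map_add]
  map_smul' c t := by
    have hJ' : ∀ (T : V₂) (U V : V₁), ⟪J T U, V⟫ = g (B U V) T := hJ
    ext u
    refine ext_inner_right ℝ fun v => ?_
    simp only [hJ', LinearMap.smul_apply, real_inner_smul_left, map_smul,
      RingHom.id_apply, smul_eq_mul]

lemma gnorm_nonneg (g : V₂ →ₗ[ℝ] V₂ →ₗ[ℝ] ℝ) (t : V₂) : 0 ≤ gnorm g t := Real.sqrt_nonneg _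

lemma gnorm_smul (g : V₂ →ₗ[ℝ] V₂ →ₗ[ℝ] ℝ) (c : ℝ) (t : V₂) :
    gnorm g (c • t) = |c| * gnorm g t := by
  have : g (c • t) (c • t) = c ^ 2 * g t t := by
    simp [map_smul, LinearMap.smul_apply, smul_eq_mul]; ring
  rw [gnorm, this, Real.sqrt_mul (sq_nonneg c), Real.sqrt_sq_eq_abs, gnorm]

end Aux2

end

noncomputable section

open scoped RealInnerProductSpace

set_option maxHeartbeats 2000000 in
/-- Stability estimate for the sub-Laplacian of the Kaplan quasinorm: with
`Q = m + 2m₂` and `Φ_g(x,t) = 16(Q+2)⟨((J_t)²+‖t‖_g² id)x,x⟩/N⁶ − 2 Σ_q ⟨((J_{ε_q})²+id)x,x⟩/N²`,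
one has `|Φ_g(x,t)| ≤ √m (Q+2+2m₂) δ(g)` for all `(x,t) ≠ (0,0)`. -/
theorem subLaplacian_defect_le_deviation
    {V₁ : Type*} [NormedAddCommGroup V₁] [InnerProductSpace ℝ V₁] [FiniteDimensional ℝ V₁]
    {V₂ : Type*} [AddCommGroup V₂] [Module ℝ V₂] [FiniteDimensional ℝ V₂]
    (m m₂ : ℕ) (hm : 1 ≤ m) (hdim₁ : Module.finrank ℝ V₁ = m)
    (hm₂ : 1 ≤ m₂) (hdim₂ : Module.finrank ℝ V₂ = m₂)
    (Q : ℕ) (hQ : Q = m + 2 * m₂)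
    (B : V₁ →ₗ[ℝ] V₁ →ₗ[ℝ] V₂)
    (hAlt : ∀ U : V₁, B U U = 0)
    (hSpan : Submodule.span ℝ {t : V₂ | ∃ U V : V₁, B U V = t} = ⊤)
    (g : V₂ →ₗ[ℝ] V₂ →ₗ[ℝ] ℝ) (hg : IsInnerProd g)
    (J : V₂ → V₁ →ₗ[ℝ] V₁) (hJ : IsJOp B g J)
    (ε : Fin m₂ → V₂) (hε : ∀ q r : Fin m₂, g (ε q) (ε r) = if q = r then 1 else 0)
    (N : V₁ → V₂ → ℝ)
    (hN : ∀ (x : V₁) (t : V₂), N x t = (‖x‖ ^ 4 + 16 * gnorm g t ^ 2) ^ ((1 : ℝ) / 4))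
    (Φ : V₁ → V₂ → ℝ)
    (hΦ : ∀ (x : V₁) (t : V₂), Φ x t =
      16 * ((Q : ℝ) + 2) *
          ⟪((J t ∘ₗ J t) + gnorm g t ^ 2 • (LinearMap.id : V₁ →ₗ[ℝ] V₁)) x, x⟫ / N x t ^ 6
        - 2 * ∑ q : Fin m₂,
            ⟪((J (ε q) ∘ₗ J (ε q)) + (LinearMap.id : V₁ →ₗ[ℝ] V₁)) x, x⟫ / N x t ^ 2) :
    ∀ (x : V₁) (t : V₂), ¬(x = 0 ∧ t = 0) →
      |Φ x t| ≤ Real.sqrt m * ((Q : ℝ) + 2 + 2 * (m₂ : ℝ)) * deltaOf g J := by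
  classical
  -- basic objects
  set b := stdOrthonormalBasis ℝ V₁ with hb
  set Jl := JLin B g J hJ with hJl
  have hJl_apply : ∀ t, Jl t = J t := fun _ => rfl
  set s := (fun T => hsNorm (J T ∘ₗ J T + LinearMap.id)) '' {T : V₂ | gnorm g T = 1} with hs
  set S := sSup s with hSdef
  have hgnorm_eps : ∀ q, gnorm g (ε q) = 1 := by
    intro q; rw [gnorm, hε q q]; simp
  -- gnorm of nonzero is positive; g T T when gnorm = 1
  have hgTT : ∀ T : V₂, gnorm g T = 1 → g T T = 1 := by
    intro T hT
    have h0 : 0 ≤ g T T := by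
      rcases eq_or_ne T 0 with rfl | h
      · simp
      · exact (hg.posdef T h).le
    have := Real.sq_sqrt h0
    rw [← gnorm, hT] at this; linarith
  -- ε is linearly independent, hence a basis
  have hli : LinearIndependent ℝ ε := by
    rw [linearIndependent_iff']
    intro t c hc q hq
    have h := congrArg (fun v => g v (ε q)) hc
    simp only [map_sum, LinearMap.smul_apply, LinearMap.sum_apply, map_smul,
      smul_eq_mul, hε, mul_ite, mul_one, mul_zero, map_zero,
      LinearMap.zero_apply] at h
    rwa [Finset.sum_ite_eq' t q c, if_pos hq] at h
  have hcard : Fintype.card (Fin m₂) = Module.finrank ℝ V₂ := by simp [hdim₂]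
  haveI : Nonempty (Fin m₂) := ⟨⟨0, hm₂⟩⟩
  set b₂ := basisOfLinearIndependentOfCardEqFinrank hli hcard with hb₂
  have hb₂coe : ∀ q, b₂ q = ε q := fun q => by
    rw [hb₂, coe_basisOfLinearIndependentOfCardEqFinrank]
  -- decomposition facts for a g-unit vector T
  have hbdd : BddAbove s := by
    refine ⟨hsNorm (LinearMap.id : V₁ →ₗ[ℝ] V₁)
      + ∑ q : Fin m₂, ∑ r : Fin m₂, hsNorm (J (ε q) ∘ₗ J (ε r)), ?_⟩
    rintro y ⟨T, hT, rfl⟩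
    set d : Fin m₂ → ℝ := fun q => b₂.repr T q with hd
    have hTsum : T = ∑ q, d q • ε q := by
      conv_lhs => rw [← b₂.sum_repr T]
      exact Finset.sum_congr rfl fun q _ => by rw [hb₂coe]
    have hgTe : ∀ q, g T (ε q) = d q := by
      intro q
      conv_lhs => rw [hTsum]
      simp only [map_sum, LinearMap.smul_apply, LinearMap.sum_apply, map_smul,
        smul_eq_mul, hε]
      simp [mul_ite, mul_one, mul_zero, Finset.sum_ite_eq']
    have hsum_sq : ∑ q, d q ^ 2 = 1 := by
      have h := congrArg (g T) hTsum
      simp only [map_sum, map_smul, smul_eq_mul, hgTe] at h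
      rw [hgTT T hT] at h
      simpa [sq] using h.symm
    have habs : ∀ q, |d q| ≤ 1 := by
      intro q
      have h1 : d q ^ 2 ≤ 1 := by
        have := Finset.single_le_sum (f := fun q => d q ^ 2)
          (fun i _ => sq_nonneg _) (Finset.mem_univ q)
        rw [hsum_sq] at this; simpa using this
      rw [← Real.sqrt_one, ← Real.sqrt_sq_eq_abs]
      exact Real.sqrt_le_sqrt (by linarith)
    have hJT : J T = ∑ q, d q • J (ε q) := by
      rw [← hJl_apply]
      conv_lhs => rw [hTsum]
      rw [map_sum]
      exact Finset.sum_congr rfl fun q _ => by rw [map_smul, hJl_apply]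
    have hcomp : J T ∘ₗ J T = ∑ q, ∑ r, (d q * d r) • (J (ε q) ∘ₗ J (ε r)) := by
      rw [← Module.End.mul_eq_comp, hJT, Finset.sum_mul_sum]
      refine Finset.sum_congr rfl fun q _ => Finset.sum_congr rfl fun r _ => ?_
      rw [smul_mul_smul_comm, Module.End.mul_eq_comp]
    calc hsNorm (J T ∘ₗ J T + LinearMap.id)
        = ‖hsVec b LinearMap.id
            + ∑ q, ∑ r, (d q * d r) • hsVec b (J (ε q) ∘ₗ J (ε r))‖ := by
          rw [hsNorm_eq_norm b, hcomp, add_comm]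
          congr 1
          rw [map_add, map_sum]
          congr 1
          refine Finset.sum_congr rfl fun q _ => ?_
          rw [map_sum]
          exact Finset.sum_congr rfl fun r _ => by rw [map_smul]
      _ ≤ ‖hsVec b (LinearMap.id : V₁ →ₗ[ℝ] V₁)‖
            + ∑ q, ∑ r, ‖(d q * d r) • hsVec b (J (ε q) ∘ₗ J (ε r))‖ := by
          refine (norm_add_le _ _).trans (add_le_add_right ?_ _)
          exact (norm_sum_le _ _).trans (Finset.sum_le_sum fun q _ => norm_sum_le _ _)
      _ ≤ hsNorm (LinearMap.id : V₁ →ₗ[ℝ] V₁)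
            + ∑ q : Fin m₂, ∑ r : Fin m₂, hsNorm (J (ε q) ∘ₗ J (ε r)) := by
          rw [← hsNorm_eq_norm b]
          refine add_le_add_right (Finset.sum_le_sum fun q _ =>
            Finset.sum_le_sum fun r _ => ?_) _
          rw [norm_smul, ← hsNorm_eq_norm b]
          calc ‖d q * d r‖ * hsNorm (J (ε q) ∘ₗ J (ε r))
              ≤ 1 * hsNorm (J (ε q) ∘ₗ J (ε r)) := by
                refine mul_le_mul_of_nonneg_right ?_ (hsNorm_nonneg _)
                rw [Real.norm_eq_abs, abs_mul]
                exact mul_le_one₀ (habs q) (abs_nonneg _) (habs r)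
            _ = _ := one_mul _
  -- membership bound
  have hmem_le : ∀ T : V₂, gnorm g T = 1 →
      hsNorm (J T ∘ₗ J T + LinearMap.id) ≤ S :=
    fun T hT => le_csSup hbdd ⟨T, hT, rfl⟩
  have hS0 : 0 ≤ S :=
    le_trans (hsNorm_nonneg _) (hmem_le (ε ⟨0, hm₂⟩) (hgnorm_eps _))
  have key : ∀ (T : V₂), gnorm g T = 1 → ∀ x : V₁,
      |⟪(J T ∘ₗ J T + (LinearMap.id : V₁ →ₗ[ℝ] V₁)) x, x⟫| ≤ S * ‖x‖ ^ 2 := by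
    intro T hT x
    exact (inner_le_hsNorm b _ x).trans
      (mul_le_mul_of_nonneg_right (hmem_le T hT) (sq_nonneg _))
  intro x t hxt
  -- N facts
  set r := gnorm g t with hr
  set A := ‖x‖ ^ 4 + 16 * r ^ 2 with hA
  have hr0 : 0 ≤ r := gnorm_nonneg g t
  have hApos : 0 < A := by
    rcases not_and_or.mp hxt with h | h
    · have : 0 < ‖x‖ := norm_pos_iff.mpr h
      have : 0 < ‖x‖ ^ 4 := by positivity
      nlinarith [sq_nonneg r]
    · have h1 : 0 < g t t := hg.posdef t h
      have hrpos : 0 < r := by rw [hr, gnorm]; exact Real.sqrt_pos.mpr h1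
      nlinarith [pow_nonneg (norm_nonneg x) 4]
  set n := N x t with hn
  have hnA : n = A ^ ((1 : ℝ) / 4) := by rw [hn, hN x t]
  have hn4 : n ^ 4 = A := by
    rw [hnA, ← Real.rpow_natCast (A ^ ((1:ℝ)/4)) 4, ← Real.rpow_mul hApos.le]
    norm_num
  have hnpos : 0 < n := by
    rw [hnA]; exact Real.rpow_pos_of_pos hApos _
  have hx2 : ‖x‖ ^ 2 ≤ n ^ 2 := by
    nlinarith [sq_nonneg r, sq_nonneg (‖x‖ ^ 2 - n ^ 2), sq_nonneg (‖x‖ ^ 2 + n ^ 2),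
      pow_pos hnpos 2, pow_nonneg (norm_nonneg x) 2]
  have ht2 : 16 * r ^ 2 ≤ n ^ 4 := by nlinarith [pow_nonneg (norm_nonneg x) 4]
  -- first term bound
  have hI1 : |⟪((J t ∘ₗ J t) + r ^ 2 • (LinearMap.id : V₁ →ₗ[ℝ] V₁)) x, x⟫|
      ≤ r ^ 2 * (S * ‖x‖ ^ 2) := by
    rcases eq_or_ne t 0 with rfl | ht
    · have hr00 : r = 0 := by rw [hr, gnorm]; simp
      have hJ0 : J (0 : V₂) = 0 := by rw [← hJl_apply]; exact map_zero Jl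
      rw [hJ0, hr00]
      simp
    · have hrpos : 0 < r := by rw [hr, gnorm]; exact Real.sqrt_pos.mpr (hg.posdef t ht)
      set T := r⁻¹ • t with hT
      have hgT : gnorm g T = 1 := by
        rw [hT, gnorm_smul, abs_of_pos (inv_pos.mpr hrpos), ← hr,
          inv_mul_cancel₀ hrpos.ne']
      have htT : t = r • T := by rw [hT, smul_inv_smul₀ hrpos.ne']
      have hJt : J t = r • J T := by
        rw [htT, ← hJl_apply, map_smul, hJl_apply]
      have hop : (J t ∘ₗ J t) + r ^ 2 • (LinearMap.id : V₁ →ₗ[ℝ] V₁)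
          = r ^ 2 • (J T ∘ₗ J T + LinearMap.id) := by
        rw [hJt, smul_add]
        congr 1
        ext v
        simp [mul_smul, map_smul, sq, LinearMap.smul_apply]
      rw [hop, LinearMap.smul_apply, real_inner_smul_left, abs_mul, abs_of_nonneg (sq_nonneg r)]
      exact mul_le_mul_of_nonneg_left (key T hgT x) (sq_nonneg r)
  have hterm1 : |16 * ((Q : ℝ) + 2) *
      ⟪((J t ∘ₗ J t) + r ^ 2 • (LinearMap.id : V₁ →ₗ[ℝ] V₁)) x, x⟫ / n ^ 6|
      ≤ ((Q : ℝ) + 2) * S := by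
    rw [abs_div, abs_of_pos (by positivity : (0:ℝ) < n ^ 6), div_le_iff₀ (by positivity)]
    have hQ2 : (0:ℝ) ≤ (Q : ℝ) + 2 := by positivity
    calc |16 * ((Q : ℝ) + 2) * ⟪((J t ∘ₗ J t) + r ^ 2 • (LinearMap.id : V₁ →ₗ[ℝ] V₁)) x, x⟫|
        = 16 * ((Q : ℝ) + 2) * |⟪((J t ∘ₗ J t) + r ^ 2 • (LinearMap.id : V₁ →ₗ[ℝ] V₁)) x, x⟫| := by
          rw [abs_mul, abs_of_nonneg (by positivity : (0:ℝ) ≤ 16 * ((Q:ℝ)+2))]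
      _ ≤ 16 * ((Q : ℝ) + 2) * (r ^ 2 * (S * ‖x‖ ^ 2)) :=
          mul_le_mul_of_nonneg_left hI1 (by positivity)
      _ = ((Q : ℝ) + 2) * S * (16 * r ^ 2 * ‖x‖ ^ 2) := by ring
      _ ≤ ((Q : ℝ) + 2) * S * (n ^ 4 * n ^ 2) := by
          refine mul_le_mul_of_nonneg_left ?_ (by positivity)
          exact mul_le_mul ht2 hx2 (by positivity) (by positivity)
      _ = ((Q : ℝ) + 2) * S * n ^ 6 := by ring
  -- second term bound
  have hterm2 : |2 * ∑ q : Fin m₂,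
      ⟪((J (ε q) ∘ₗ J (ε q)) + (LinearMap.id : V₁ →ₗ[ℝ] V₁)) x, x⟫ / n ^ 2|
      ≤ 2 * (m₂ : ℝ) * S := by
    have heach : ∀ q : Fin m₂,
        |⟪((J (ε q) ∘ₗ J (ε q)) + (LinearMap.id : V₁ →ₗ[ℝ] V₁)) x, x⟫ / n ^ 2| ≤ S := by
      intro q
      rw [abs_div, abs_of_pos (by positivity : (0:ℝ) < n ^ 2), div_le_iff₀ (by positivity)]
      calc |⟪((J (ε q) ∘ₗ J (ε q)) + (LinearMap.id : V₁ →ₗ[ℝ] V₁)) x, x⟫|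
          ≤ S * ‖x‖ ^ 2 := key (ε q) (hgnorm_eps q) x
        _ ≤ S * n ^ 2 := mul_le_mul_of_nonneg_left hx2 hS0
    calc |2 * ∑ q : Fin m₂,
        ⟪((J (ε q) ∘ₗ J (ε q)) + (LinearMap.id : V₁ →ₗ[ℝ] V₁)) x, x⟫ / n ^ 2|
        = 2 * |∑ q : Fin m₂,
            ⟪((J (ε q) ∘ₗ J (ε q)) + (LinearMap.id : V₁ →ₗ[ℝ] V₁)) x, x⟫ / n ^ 2| := by
          rw [abs_mul]; norm_num
      _ ≤ 2 * ∑ q : Fin m₂,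
            |⟪((J (ε q) ∘ₗ J (ε q)) + (LinearMap.id : V₁ →ₗ[ℝ] V₁)) x, x⟫ / n ^ 2| := by
          have := Finset.abs_sum_le_sum_abs
            (fun q : Fin m₂ =>
              ⟪((J (ε q) ∘ₗ J (ε q)) + (LinearMap.id : V₁ →ₗ[ℝ] V₁)) x, x⟫ / n ^ 2)
            Finset.univ
          linarith
      _ ≤ 2 * ∑ _q : Fin m₂, S := by
          have := Finset.sum_le_sum (fun q (_ : q ∈ Finset.univ) => heach q)
          linarith
      _ = 2 * (m₂ : ℝ) * S := by
          rw [Finset.sum_const, Finset.card_univ, Fintype.card_fin]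
          ring
  -- conclusion
  have hdelta : Real.sqrt m * ((Q : ℝ) + 2 + 2 * (m₂ : ℝ)) * deltaOf g J
      = ((Q : ℝ) + 2 + 2 * (m₂ : ℝ)) * S := by
    rw [deltaOf, hdim₁, ← hs, ← hSdef]
    have hsm : Real.sqrt m ≠ 0 := by
      have : (0:ℝ) < m := by exact_mod_cast hm
      positivity
    field_simp
  rw [hdelta, hΦ x t, ← hr, ← hn]
  calc |16 * ((Q : ℝ) + 2) *
        ⟪((J t ∘ₗ J t) + r ^ 2 • (LinearMap.id : V₁ →ₗ[ℝ] V₁)) x, x⟫ / n ^ 6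
      - 2 * ∑ q : Fin m₂,
          ⟪((J (ε q) ∘ₗ J (ε q)) + (LinearMap.id : V₁ →ₗ[ℝ] V₁)) x, x⟫ / n ^ 2|
      ≤ |16 * ((Q : ℝ) + 2) *
          ⟪((J t ∘ₗ J t) + r ^ 2 • (LinearMap.id : V₁ →ₗ[ℝ] V₁)) x, x⟫ / n ^ 6|
        + |2 * ∑ q : Fin m₂,
            ⟪((J (ε q) ∘ₗ J (ε q)) + (LinearMap.id : V₁ →ₗ[ℝ] V₁)) x, x⟫ / n ^ 2| :=
        abs_sub _ _
    _ ≤ ((Q : ℝ) + 2) * S + 2 * (m₂ : ℝ) * S := add_le_add hterm1 hterm2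
    _ = ((Q : ℝ) + 2 + 2 * (m₂ : ℝ)) * S := by ring

end
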